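/- Let B, C be symmetric positive definite d×d matrices and (α_k) a positive decreasing sequence with α_k → 0 and ∑ α_k = ∞. Set A_k = I - α_k BC and Π_n = A_n ⋯ A_1. Then the spectral norm ρ(Π_n) → 0 as n → ∞. -/

import Mathlib

open Filter
open scoped Matrix
open scoped MatrixOrder

lemma aux_norm_one_sub_smul {E : Type*} [NormedAddCommGroup E] [InnerProductSpace ℝ E]
    (T : E →L[ℝ] E) (μ a : ℝ) (hμ0 : 0 ≤ μ)
    (hcoer : ∀ x : E, μ * ‖x‖ ^ 2 ≤ (inner ℝ (T x) x : ℝ))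
    (ha : 0 ≤ a) (h1 : a * ‖T‖ ^ 2 ≤ μ) (h2 : a * μ ≤ 1) :
    ‖(1 : E →L[ℝ] E) - a • T‖ ≤ 1 - a * μ / 2 := by
  have hv : 0 ≤ 1 - a * μ / 2 := by nlinarith
  refine ContinuousLinearMap.opNorm_le_bound _ hv fun x => ?_
  have happ : ((1 : E →L[ℝ] E) - a • T) x = x - a • T x := by
    simp [ContinuousLinearMap.sub_apply]
  rw [happ]
  have h3 : ‖T x‖ ≤ ‖T‖ * ‖x‖ := T.le_opNorm x
  have h3' : ‖T x‖ ^ 2 ≤ ‖T‖ ^ 2 * ‖x‖ ^ 2 := by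
    rw [← mul_pow]; exact pow_le_pow_left₀ (norm_nonneg _) h3 2
  have h4 : μ * ‖x‖ ^ 2 ≤ (inner ℝ x (T x) : ℝ) := by
    rw [real_inner_comm]; exact hcoer x
  have h5 : ‖x - a • T x‖ ^ 2 = ‖x‖ ^ 2 - 2 * (a * (inner ℝ x (T x) : ℝ)) + a ^ 2 * ‖T x‖ ^ 2 := by
    rw [norm_sub_sq_real, real_inner_smul_right, norm_smul]
    rw [mul_pow]
    simp [abs_of_nonneg ha, sq_abs]
  have husq : ‖x - a • T x‖ ^ 2 ≤ ((1 - a * μ / 2) * ‖x‖) ^ 2 := by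
    have key : a ^ 2 * ‖T x‖ ^ 2 ≤ a * μ * ‖x‖ ^ 2 := by
      nlinarith [mul_le_mul_of_nonneg_left h1 (mul_nonneg ha (sq_nonneg ‖x‖)), sq_nonneg ‖x‖]
    nlinarith [mul_le_mul_of_nonneg_left h4 (by linarith : (0:ℝ) ≤ 2 * a), sq_nonneg ‖x‖,
      sq_nonneg (a * μ * ‖x‖)]
  calc ‖x - a • T x‖ = Real.sqrt (‖x - a • T x‖ ^ 2) := (Real.sqrt_sq (norm_nonneg _)).symm
    _ ≤ Real.sqrt (((1 - a * μ / 2) * ‖x‖) ^ 2) := Real.sqrt_le_sqrt husq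
    _ = (1 - a * μ / 2) * ‖x‖ := Real.sqrt_sq (mul_nonneg hv (norm_nonneg _))

/-- A positive definite real matrix `M` is coercive: `μ * ‖x‖² ≤ ⟪Mx, x⟫` for some `μ > 0`. -/
lemma aux_coercive {d : ℕ} (hd : 0 < d) {M : Matrix (Fin d) (Fin d) ℝ} (hM : M.PosDef) :
    ∃ μ : ℝ, 0 < μ ∧ ∀ x : EuclideanSpace ℝ (Fin d),
      μ * ‖x‖ ^ 2 ≤ (inner ℝ (Matrix.toEuclideanCLM (𝕜 := ℝ) M x) x : ℝ) := by
  haveI : Nonempty (Fin d) := Fin.pos_iff_nonempty.mp hd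
  set R := CFC.sqrt M with hR
  have hRR : R * R = M := CFC.sqrt_mul_sqrt_self M hM.posSemidef.nonneg
  have hRH : R.IsHermitian := (Matrix.nonneg_iff_posSemidef.mp (CFC.sqrt_nonneg M)).1
  have hdetR : IsUnit R.det := by
    have : R.det * R.det = M.det := by rw [← Matrix.det_mul, hRR]
    have hMdet : 0 < M.det := hM.det_pos
    refine (Ne.isUnit ?_)
    intro h0
    rw [h0, mul_zero] at this
    exact hMdet.ne' this.symm
  have hRinv : R⁻¹ * R = 1 := Matrix.nonsing_inv_mul R hdetR
  set φ := Matrix.toEuclideanCLM (𝕜 := ℝ) (n := Fin d)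
  set U := φ R with hU
  set V := φ R⁻¹ with hV
  have hVU : V * U = 1 := by rw [hU, hV, ← map_mul, hRinv, map_one]
  -- U is self-adjoint
  have hstarR : star R = R := hRH
  have hUsa : IsSelfAdjoint U := by
    rw [IsSelfAdjoint, hU, ← map_star, hstarR]
  have hadj : ContinuousLinearMap.adjoint U = U := hUsa.adjoint_eq
  -- c0 := ‖V‖ > 0
  have hone : (1 : ℝ) ≤ ‖V‖ * ‖U‖ := by
    calc (1 : ℝ) = ‖(1 : EuclideanSpace ℝ (Fin d) →L[ℝ] EuclideanSpace ℝ (Fin d))‖ := by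
          rw [ContinuousLinearMap.one_def, ContinuousLinearMap.norm_id]
      _ = ‖V * U‖ := by rw [hVU]
      _ ≤ ‖V‖ * ‖U‖ := norm_mul_le _ _
  have hc0 : 0 < ‖V‖ := by
    by_contra h
    push_neg at h
    nlinarith [norm_nonneg U]
  refine ⟨(‖V‖ ^ 2)⁻¹, by positivity, fun x => ?_⟩
  have hMx : φ M x = U (U x) := by
    rw [← hRR, map_mul]; rfl
  have hinner : (inner ℝ (φ M x) x : ℝ) = ‖U x‖ ^ 2 := by
    rw [hMx, real_inner_comm, ← ContinuousLinearMap.adjoint_inner_left, hadj,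
      real_inner_self_eq_norm_sq]
  rw [hinner]
  have hxle : ‖x‖ ≤ ‖V‖ * ‖U x‖ := by
    have : x = V (U x) := by
      have := congrArg (fun f => f x) hVU
      simpa [ContinuousLinearMap.mul_apply] using this.symm
    calc ‖x‖ = ‖V (U x)‖ := by rw [← this]
      _ ≤ ‖V‖ * ‖U x‖ := V.le_opNorm _
  have hxsq : ‖x‖ ^ 2 ≤ ‖V‖ ^ 2 * ‖U x‖ ^ 2 := by
    rw [← mul_pow]; exact pow_le_pow_left₀ (norm_nonneg _) hxle 2
  rw [inv_mul_le_iff₀ (by positivity)]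
  linarith [hxsq]

/-- Let `B, C` be symmetric positive definite, `(α_k)` positive decreasing with
`α_k → 0` and `∑ α_k = ∞`. With `A_k = I - α_k BC` and `Π_n = A_n ⋯ A_1`, the operator
norm of `Π_n` tends to `0`. -/
theorem stmt8 {d : ℕ} (B C : Matrix (Fin d) (Fin d) ℝ) (hB : B.PosDef) (hC : C.PosDef)
    (α : ℕ → ℝ) (hpos : ∀ k, 0 < α k) (hdec : ∀ k, α (k + 1) ≤ α k)
    (hα0 : Tendsto α atTop (nhds 0))
    (hdiv : Tendsto (fun n => ∑ k ∈ Finset.Icc 1 n, α k) atTop atTop)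
    (P : ℕ → Matrix (Fin d) (Fin d) ℝ) (hP0 : P 0 = 1)
    (hPrec : ∀ n, P (n + 1) = (1 - α (n + 1) • (B * C)) * P n) :
    Tendsto (fun n => ‖Matrix.toEuclideanCLM (𝕜 := ℝ) (P n)‖) atTop (nhds 0) := by
  rcases Nat.eq_zero_or_pos d with hd | hd
  · -- degenerate case d = 0
    subst hd
    haveI : Subsingleton (EuclideanSpace ℝ (Fin 0)) :=
      ⟨fun a b => by ext i; exact i.elim0⟩
    have hz : ∀ n, ‖Matrix.toEuclideanCLM (𝕜 := ℝ) (P n)‖ = 0 := fun n => by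
      have : Matrix.toEuclideanCLM (𝕜 := ℝ) (P n) = 0 :=
        ContinuousLinearMap.ext fun x => Subsingleton.elim _ _
      rw [this, norm_zero]
    have heq : (fun n => ‖Matrix.toEuclideanCLM (𝕜 := ℝ) (P n)‖) = fun _ : ℕ => (0:ℝ) :=
      funext hz
    rw [heq]
    exact tendsto_const_nhds
  -- main case
  haveI : Nonempty (Fin d) := Fin.pos_iff_nonempty.mp hd
  set φ := Matrix.toEuclideanCLM (𝕜 := ℝ) (n := Fin d) with hφ
  -- square root of B
  set S := CFC.sqrt B with hSdef
  have hSS : S * S = B := CFC.sqrt_mul_sqrt_self B hB.posSemidef.nonneg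
  have hdetS : IsUnit S.det := by
    have h1 : S.det * S.det = B.det := by rw [← Matrix.det_mul, hSS]
    have h2 : 0 < B.det := hB.det_pos
    refine Ne.isUnit fun h0 => ?_
    rw [h0, mul_zero] at h1
    exact h2.ne' h1.symm
  have hSinv : S⁻¹ * S = 1 := Matrix.nonsing_inv_mul S hdetS
  have hSinv' : S * S⁻¹ = 1 := Matrix.mul_nonsing_inv S hdetS
  have hSH : S.IsHermitian := (Matrix.nonneg_iff_posSemidef.mp (CFC.sqrt_nonneg B)).1
  -- the conjugated matrix M = S C S is positive definite
  set M := S * C * S with hMdef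
  have hM : M.PosDef := by
    have hMh : M = S * C * S.conjTranspose := by rw [hSH.eq]
    rw [hMh]
    refine Matrix.PosDef.of_dotProduct_mulVec_pos ?_ fun x hx => ?_
    · rw [Matrix.IsHermitian, Matrix.conjTranspose_mul, Matrix.conjTranspose_mul,
        Matrix.conjTranspose_conjTranspose, hC.1.eq, hSH.eq, Matrix.mul_assoc]
    · have hxS : S.conjTranspose *ᵥ x ≠ 0 := by
        intro h0
        have : S *ᵥ x = 0 := by rwa [hSH.eq] at h0
        have hinj : Function.Injective (S.mulVec) :=
          Matrix.mulVec_injective_iff_isUnit.mpr (Matrix.isUnit_iff_isUnit_det _ |>.2 hdetS)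
        exact hx (by simpa using hinj (by simpa using this))
      have := hC.dotProduct_mulVec_pos hxS
      calc 0 < star (S.conjTranspose *ᵥ x) ⬝ᵥ C *ᵥ (S.conjTranspose *ᵥ x) := this
        _ = star x ⬝ᵥ (S * C * S.conjTranspose) *ᵥ x := by
            simp only [Matrix.star_mulVec, Matrix.conjTranspose_conjTranspose,
              Matrix.dotProduct_mulVec, Matrix.vecMul_vecMul]
  set T := φ M with hT
  obtain ⟨μ, hμ, hcoer⟩ := aux_coercive hd hM
  -- choose N such that α k is small for k ≥ N
  have hεpos : (0:ℝ) < min (μ / (‖T‖ ^ 2 + 1)) (1 / μ) := by positivity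
  obtain ⟨N, hN⟩ := (Filter.eventually_atTop).mp (hα0.eventually_lt_const hεpos)
  set c : ℝ := μ / 2 with hc
  have hc0 : 0 < c := by positivity
  -- bound on each factor for k ≥ N
  have hfac : ∀ k, N ≤ k → ‖(1 : _) - α k • T‖ ≤ 1 - c * α k := by
    intro k hk
    have hαk := hN k hk
    have h1 : α k * ‖T‖ ^ 2 ≤ μ := by
      have h2 : α k < μ / (‖T‖ ^ 2 + 1) := lt_of_lt_of_le hαk (min_le_left _ _)
      have : α k * (‖T‖ ^ 2 + 1) < μ := by
        rw [← lt_div_iff₀ (by positivity)]; exact h2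
      nlinarith [(hpos k).le, sq_nonneg ‖T‖]
    have h2 : α k * μ ≤ 1 := by
      have h3 : α k < 1 / μ := lt_of_lt_of_le hαk (min_le_right _ _)
      rw [lt_div_iff₀ hμ] at h3
      linarith
    have := aux_norm_one_sub_smul T μ (α k) hμ.le hcoer (hpos k).le h1 h2
    calc ‖(1 : _) - α k • T‖ ≤ 1 - α k * μ / 2 := this
      _ = 1 - c * α k := by rw [hc]; ring
  have hfac_nonneg : ∀ k, N ≤ k → (0:ℝ) ≤ 1 - c * α k := by
    intro k hk
    have hαk := hN k hk
    have h3 : α k < 1 / μ := lt_of_lt_of_le hαk (min_le_right _ _)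
    rw [lt_div_iff₀ hμ] at h3
    rw [hc]; nlinarith [(hpos k).le]
  -- conjugation identity
  have key : ∀ W : Matrix (Fin d) (Fin d) ℝ, S⁻¹ * (B * C * W) = M * (S⁻¹ * W) := by
    intro W
    rw [hMdef, ← hSS]
    calc S⁻¹ * (S * S * C * W) = (S⁻¹ * S) * (S * (C * W)) := by noncomm_ring
      _ = S * (C * W) := by rw [hSinv, one_mul]
      _ = (S * C) * ((S * S⁻¹) * W) := by rw [hSinv']; noncomm_ring
      _ = S * C * S * (S⁻¹ * W) := by noncomm_ring
  have hconj : ∀ n, S⁻¹ * P (n + 1) * S = (1 - α (n + 1) • M) * (S⁻¹ * P n * S) := by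
    intro n
    rw [hPrec n]
    calc S⁻¹ * ((1 - α (n + 1) • (B * C)) * P n) * S
        = S⁻¹ * (P n * S) - α (n + 1) • (S⁻¹ * (B * C * (P n * S))) := by noncomm_ring
      _ = S⁻¹ * (P n * S) - α (n + 1) • (M * (S⁻¹ * (P n * S))) := by rw [key]
      _ = (1 - α (n + 1) • M) * (S⁻¹ * P n * S) := by noncomm_ring
  -- the conjugated norm sequence
  set g : ℕ → ℝ := fun n => ‖φ (S⁻¹ * P n * S)‖ with hg
  have hgrec : ∀ n, g (n + 1) ≤ ‖(1 : _) - α (n + 1) • T‖ * g n := by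
    intro n
    rw [hg]
    simp only
    rw [hconj n, map_mul]
    calc ‖φ (1 - α (n + 1) • M) * φ (S⁻¹ * P n * S)‖
        ≤ ‖φ (1 - α (n + 1) • M)‖ * ‖φ (S⁻¹ * P n * S)‖ := norm_mul_le _ _
      _ = ‖(1 : _) - α (n + 1) • T‖ * g n := by
          rw [map_sub, map_one, map_smul, hT]
  -- key induction
  have hgbound : ∀ n, N ≤ n → g n ≤ g N * ∏ k ∈ Finset.Ioc N n, (1 - c * α k) := by
    intro n hn
    induction n, hn using Nat.le_induction with
    | base => simp
    | succ n hn ih =>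
      have hprod_nonneg : (0:ℝ) ≤ ∏ k ∈ Finset.Ioc N n, (1 - c * α k) :=
        Finset.prod_nonneg fun k hk => hfac_nonneg k (le_of_lt (Finset.mem_Ioc.mp hk).1)
      calc g (n + 1) ≤ ‖(1 : _) - α (n + 1) • T‖ * g n := hgrec n
        _ ≤ (1 - c * α (n + 1)) * g n := by
            apply mul_le_mul_of_nonneg_right (hfac (n+1) (by omega)) (norm_nonneg _)
        _ ≤ (1 - c * α (n + 1)) * (g N * ∏ k ∈ Finset.Ioc N n, (1 - c * α k)) := by
            apply mul_le_mul_of_nonneg_left ih (hfac_nonneg (n+1) (by omega))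
        _ = g N * ∏ k ∈ Finset.Ioc N (n + 1), (1 - c * α k) := by
            rw [Finset.prod_Ioc_succ_top hn]
            ring
  -- product bounded by exponential
  have hprodexp : ∀ n, N ≤ n →
      ∏ k ∈ Finset.Ioc N n, (1 - c * α k) ≤ Real.exp (-(c * ∑ k ∈ Finset.Ioc N n, α k)) := by
    intro n hn
    have : ∀ k ∈ Finset.Ioc N n, (1 - c * α k) ≤ Real.exp (-(c * α k)) := by
      intro k hk
      have := Real.add_one_le_exp (-(c * α k))
      linarith
    calc ∏ k ∈ Finset.Ioc N n, (1 - c * α k)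
        ≤ ∏ k ∈ Finset.Ioc N n, Real.exp (-(c * α k)) := by
          apply Finset.prod_le_prod
          · intro k hk; exact hfac_nonneg k (le_of_lt (Finset.mem_Ioc.mp hk).1)
          · exact this
      _ = Real.exp (∑ k ∈ Finset.Ioc N n, -(c * α k)) := (Real.exp_sum _ _).symm
      _ = Real.exp (-(c * ∑ k ∈ Finset.Ioc N n, α k)) := by
          rw [Finset.sum_neg_distrib, ← Finset.mul_sum]
  -- sum over Ioc N n in terms of partial sums
  set A : ℕ → ℝ := fun n => ∑ k ∈ Finset.Icc 1 n, α k with hA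
  have hsum : ∀ n, N ≤ n → ∑ k ∈ Finset.Ioc N n, α k = A n - A N := by
    intro n hn
    have h1 : ∀ m, A m = ∑ k ∈ Finset.Ioc 0 m, α k := by
      intro m; rw [hA]; simp only; rw [← Finset.Icc_add_one_left_eq_Ioc, zero_add]
    have := Finset.sum_Ioc_consecutive α (Nat.zero_le N) hn
    rw [h1 n, h1 N, ← this]; ring
  -- final norm bound for P n
  set K : ℝ := ‖φ S‖ * ‖φ S⁻¹‖ with hK
  have hPn : ∀ n, P n = S * (S⁻¹ * P n * S) * S⁻¹ := by
    intro n
    calc P n = (S * S⁻¹) * P n * (S * S⁻¹) := by rw [hSinv']; noncomm_ring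
      _ = S * (S⁻¹ * P n * S) * S⁻¹ := by noncomm_ring
  have hnormPn : ∀ n, ‖φ (P n)‖ ≤ K * g n := by
    intro n
    conv_lhs => rw [hPn n]
    rw [map_mul, map_mul]
    calc ‖φ S * φ (S⁻¹ * P n * S) * φ S⁻¹‖
        ≤ ‖φ S * φ (S⁻¹ * P n * S)‖ * ‖φ S⁻¹‖ := norm_mul_le _ _
      _ ≤ ‖φ S‖ * ‖φ (S⁻¹ * P n * S)‖ * ‖φ S⁻¹‖ :=
          mul_le_mul_of_nonneg_right (norm_mul_le _ _) (norm_nonneg _)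
      _ = K * g n := by rw [hK, hg]; ring
  -- assemble: eventually bound by an exponential going to 0
  set D : ℝ := K * g N * Real.exp (c * A N) with hD
  have hbound : ∀ n, N ≤ n → ‖φ (P n)‖ ≤ D * Real.exp (-(c * A n)) := by
    intro n hn
    have hKnn : 0 ≤ K := mul_nonneg (norm_nonneg _) (norm_nonneg _)
    calc ‖φ (P n)‖ ≤ K * g n := hnormPn n
      _ ≤ K * (g N * ∏ k ∈ Finset.Ioc N n, (1 - c * α k)) :=
          mul_le_mul_of_nonneg_left (hgbound n hn) hKnn
      _ ≤ K * (g N * Real.exp (-(c * ∑ k ∈ Finset.Ioc N n, α k))) := by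
          apply mul_le_mul_of_nonneg_left _ hKnn
          exact mul_le_mul_of_nonneg_left (hprodexp n hn) (norm_nonneg _)
      _ = D * Real.exp (-(c * A n)) := by
          rw [hsum n hn, hD]
          rw [show -(c * (A n - A N)) = c * A N + -(c * A n) by ring, Real.exp_add]
          ring
  have htend : Tendsto (fun n => D * Real.exp (-(c * A n))) atTop (nhds 0) := by
    have h1 : Tendsto (fun n => c * A n) atTop atTop := hdiv.const_mul_atTop hc0
    have h2 : Tendsto (fun n => -(c * A n)) atTop atBot := tendsto_neg_atBot_iff.mpr h1
    have h3 : Tendsto (fun n => Real.exp (-(c * A n))) atTop (nhds 0) :=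
      Real.tendsto_exp_atBot.comp h2
    simpa using h3.const_mul D
  refine squeeze_zero' (Filter.Eventually.of_forall fun n => norm_nonneg _)
    (Filter.eventually_atTop.mpr ⟨N, fun n hn => hbound n hn⟩) htend
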